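/- Let (X, 𝒜, m) be a measure space and let (Y_n)_{n∈ℕ} and (Z_n)_{n∈ℕ} be sequences of measurable subsets of X that are internested, i.e. there is an integer k ≥ 1 such that Y_{n+k} ⊆ Z_n ⊆ Y_{n−k} for all n ≥ k. Suppose (Y_n) is regular, i.e. there exist a real C > 0 and an integer K ≥ 1 with m(Y_{n+K}) ≥ C·m(Y_n) for all n ∈ ℕ, and suppose 0 < m(Y_n) < ∞ for all n. Then for every measurable set A ⊆ X, the densities satisfy: m(A ∩ Y_n)/m(Y_n) → 1 as n → ∞ if and only if m(A ∩ Z_n)/m(Z_n) → 1 as n → ∞. -/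

import Mathlib

open MeasureTheory Filter
open scoped ENNReal

private lemma div_mul_aux (a b e : ℝ≥0∞) (he0 : e ≠ 0) (heT : e ≠ ⊤) :
    a / (e * b) = e⁻¹ * (a / b) := by
  rw [div_eq_mul_inv, ENNReal.mul_inv (Or.inl he0) (Or.inl heT), div_eq_mul_inv,
    ← mul_assoc, mul_comm a e⁻¹, mul_assoc]

private lemma density_one_iff_compl {X : Type*} [MeasurableSpace X] (μ : Measure X)
    (A : Set X) (hA : MeasurableSet A) (W : ℕ → Set X)
    (h : ∀ᶠ n in atTop, 0 < μ (W n) ∧ μ (W n) < ⊤) :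
    Tendsto (fun n => μ (A ∩ W n) / μ (W n)) atTop (nhds 1) ↔
      Tendsto (fun n => μ (Aᶜ ∩ W n) / μ (W n)) atTop (nhds 0) := by
  set f := fun n => μ (A ∩ W n) / μ (W n) with hf
  set g := fun n => μ (Aᶜ ∩ W n) / μ (W n) with hg
  have key : ∀ᶠ n in atTop, f n = 1 - g n ∧ g n ≤ 1 := by
    filter_upwards [h] with n ⟨hp, hfin⟩
    have hs0 : μ (W n) ≠ 0 := hp.ne'
    have hsT : μ (W n) ≠ ⊤ := hfin.ne
    have hgle : g n ≤ 1 := by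
      apply ENNReal.div_le_of_le_mul
      rw [one_mul]
      exact measure_mono Set.inter_subset_right
    have hadd : μ (A ∩ W n) + μ (Aᶜ ∩ W n) = μ (W n) := by
      have := measure_inter_add_diff (μ := μ) (W n) hA
      rw [Set.inter_comm A, Set.inter_comm Aᶜ, ← Set.diff_eq] at *
      simpa [Set.diff_eq, Set.inter_comm] using this
    have hsum : f n + g n = 1 := by
      rw [hf, hg]
      simp only
      rw [ENNReal.div_add_div_same, hadd, ENNReal.div_self hs0 hsT]
    have hgT : g n ≠ ⊤ := (lt_of_le_of_lt hgle ENNReal.one_lt_top).ne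
    exact ⟨ENNReal.eq_sub_of_add_eq hgT hsum, hgle⟩
  constructor
  · intro hft
    have h1 : Tendsto (fun n => 1 - f n) atTop (nhds (1 - 1)) :=
      ENNReal.Tendsto.sub tendsto_const_nhds hft (Or.inl ENNReal.one_ne_top)
    simp only [tsub_self] at h1
    refine h1.congr' ?_
    filter_upwards [key] with n ⟨h1', h2'⟩
    rw [h1', ENNReal.sub_sub_cancel ENNReal.one_ne_top h2']
  · intro hgt
    have h1 : Tendsto (fun n => 1 - g n) atTop (nhds (1 - 0)) :=
      ENNReal.Tendsto.sub tendsto_const_nhds hgt (Or.inl ENNReal.one_ne_top)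
    simp only [tsub_zero] at h1
    refine h1.congr' ?_
    filter_upwards [key] with n ⟨h1', _⟩
    exact h1'.symm

private lemma squeeze_aux (g h : ℕ → ℝ≥0∞) (D : ℝ≥0∞) (hD : D ≠ ⊤) (s : ℕ)
    (hb : ∀ᶠ n in atTop, g n ≤ D * h (n - s))
    (hh : Tendsto h atTop (nhds 0)) : Tendsto g atTop (nhds 0) := by
  have h1 : Tendsto (fun n => h (n - s)) atTop (nhds 0) :=
    hh.comp (tendsto_sub_atTop_nat s)
  have h2 : Tendsto (fun n => D * h (n - s)) atTop (nhds 0) := by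
    simpa using ENNReal.Tendsto.const_mul h1 (Or.inr hD)
  exact tendsto_of_tendsto_of_tendsto_of_le_of_le' tendsto_const_nhds h2
    (Eventually.of_forall fun n => zero_le) hb

/-- If `(Y n)` and `(Z n)` are internested sequences of measurable sets,
`(Y n)` is regular, and `0 < μ (Y n) < ∞` for all `n`, then for every measurable set
`A` the density of `A` in `Y n` tends to `1` iff the density of `A` in `Z n` tends
to `1`. -/
theorem internested_density_equiv {X : Type*} [MeasurableSpace X] (μ : Measure X)
    (Y Z : ℕ → Set X)
    (hY : ∀ n, MeasurableSet (Y n)) (hZ : ∀ n, MeasurableSet (Z n))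
    (k : ℕ) (hk : 1 ≤ k)
    (hinter : ∀ n, k ≤ n → Y (n + k) ⊆ Z n ∧ Z n ⊆ Y (n - k))
    (C : ℝ) (hC : 0 < C) (K : ℕ) (hK : 1 ≤ K)
    (hreg : ∀ n, ENNReal.ofReal C * μ (Y n) ≤ μ (Y (n + K)))
    (hpos : ∀ n, 0 < μ (Y n)) (hfin : ∀ n, μ (Y n) < ⊤)
    (A : Set X) (hA : MeasurableSet A) :
    Tendsto (fun n => μ (A ∩ Y n) / μ (Y n)) atTop (nhds 1) ↔
      Tendsto (fun n => μ (A ∩ Z n) / μ (Z n)) atTop (nhds 1) := by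
  -- replace C by c = min C 1
  set c : ℝ := min C 1 with hcdef
  have hc : 0 < c := lt_min hC one_pos
  have hreg' : ∀ n, ENNReal.ofReal c * μ (Y n) ≤ μ (Y (n + K)) := fun n =>
    le_trans (mul_le_mul_left (ENNReal.ofReal_le_ofReal (min_le_left _ _)) _) (hreg n)
  -- nesting of the Y's in steps of 2k
  have nest1 : ∀ m, Y (m + 2 * k) ⊆ Y m := by
    intro m
    have h := hinter (m + k) (by omega)
    have e1 : m + k + k = m + 2 * k := by omega
    have e2 : m + k - k = m := by omega
    rw [e1, e2] at h
    exact h.1.trans h.2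
  have nestT : ∀ m t, Y (m + 2 * k * t) ⊆ Y m := by
    intro m t
    induction t with
    | zero => simp
    | succ t ih =>
      have e1 : m + 2 * k * (t + 1) = m + 2 * k * t + 2 * k := by ring
      rw [e1]
      exact (nest1 (m + 2 * k * t)).trans ih
  -- iterated regularity
  have regJ : ∀ m j, (ENNReal.ofReal c) ^ j * μ (Y m) ≤ μ (Y (m + j * K)) := by
    intro m j
    induction j with
    | zero => simp
    | succ j ih =>
      have e1 : m + (j + 1) * K = m + j * K + K := by ring
      rw [e1, pow_succ, mul_comm ((ENNReal.ofReal c) ^ j) (ENNReal.ofReal c), mul_assoc]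
      exact le_trans (mul_le_mul_right ih _) (hreg' (m + j * K))
  set e : ℝ≥0∞ := (ENNReal.ofReal c) ^ (2 * k) with hedef
  have he0 : e ≠ 0 := pow_ne_zero _ (ENNReal.ofReal_pos.2 hc).ne'
  have heT : e ≠ ⊤ := ENNReal.pow_ne_top ENNReal.ofReal_ne_top
  have heiT : e⁻¹ ≠ ⊤ := ENNReal.inv_ne_top.2 he0
  -- key comparison
  have key3 : ∀ n, k ≤ n → e * μ (Y (n - k)) ≤ μ (Y (n + k)) := by
    intro n hn
    obtain ⟨K', rfl⟩ : ∃ K', K = K' + 1 := ⟨K - 1, by omega⟩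
    have e1 : n - k + 2 * k * (K' + 1) = n + k + 2 * k * K' := by
      have : 2 * k * (K' + 1) = 2 * k * K' + 2 * k := by ring
      omega
    calc e * μ (Y (n - k)) ≤ μ (Y (n - k + 2 * k * (K' + 1))) := regJ (n - k) (2 * k)
      _ = μ (Y (n + k + 2 * k * K')) := by rw [e1]
      _ ≤ μ (Y (n + k)) := measure_mono (nestT (n + k) K')
  -- positivity and finiteness of Z's measure eventually
  have hZpos : ∀ n, k ≤ n → 0 < μ (Z n) :=
    fun n hn => lt_of_lt_of_le (hpos (n + k)) (measure_mono (hinter n hn).1)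
  have hZfin : ∀ n, k ≤ n → μ (Z n) < ⊤ :=
    fun n hn => lt_of_le_of_lt (measure_mono (hinter n hn).2) (hfin (n - k))
  rw [density_one_iff_compl μ A hA Y (Eventually.of_forall fun n => ⟨hpos n, hfin n⟩),
    density_one_iff_compl μ A hA Z
      (eventually_atTop.2 ⟨k, fun n hn => ⟨hZpos n hn, hZfin n hn⟩⟩)]
  set gY := fun n => μ (Aᶜ ∩ Y n) / μ (Y n) with hgY
  set gZ := fun n => μ (Aᶜ ∩ Z n) / μ (Z n) with hgZ
  constructor
  · intro hY0
    apply squeeze_aux gZ gY e⁻¹ heiT k _ hY0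
    refine eventually_atTop.2 ⟨k, fun n hn => ?_⟩
    have h1 : μ (Aᶜ ∩ Z n) ≤ μ (Aᶜ ∩ Y (n - k)) :=
      measure_mono (Set.inter_subset_inter_right _ (hinter n hn).2)
    have h2 : e * μ (Y (n - k)) ≤ μ (Z n) :=
      le_trans (key3 n hn) (measure_mono (hinter n hn).1)
    calc gZ n ≤ μ (Aᶜ ∩ Y (n - k)) / (e * μ (Y (n - k))) := ENNReal.div_le_div h1 h2
      _ = e⁻¹ * gY (n - k) := div_mul_aux _ _ _ he0 heT
  · intro hZ0
    apply squeeze_aux gY gZ e⁻¹ heiT k _ hZ0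
    refine eventually_atTop.2 ⟨2 * k, fun m hm => ?_⟩
    set n := m - k with hn
    have hnk : k ≤ n := by omega
    have hmn : m = n + k := by omega
    have h1 : μ (Aᶜ ∩ Y m) ≤ μ (Aᶜ ∩ Z n) := by
      rw [hmn]
      exact measure_mono (Set.inter_subset_inter_right _ (hinter n hnk).1)
    have h2 : e * μ (Z n) ≤ μ (Y m) := by
      rw [hmn]
      exact le_trans (mul_le_mul_right (measure_mono (hinter n hnk).2) _) (key3 n hnk)
    calc gY m ≤ μ (Aᶜ ∩ Z n) / (e * μ (Z n)) := ENNReal.div_le_div h1 h2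
      _ = e⁻¹ * gZ (m - k) := div_mul_aux _ _ _ he0 heT
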